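/- Let G = (V, E) be a 2-vertex strongly biconnected directed graph, let G_1 = (V, L) be a minimal 2-vertex-connected spanning subgraph of G, and let G_2 = (V, U) be a minimal 3-vertex-connected spanning subgraph of the underlying undirected graph of G. Let A = { (v, w) ∈ E : the undirected edge {v, w} belongs to U }. Then the directed spanning subgraph G_s = (V, L ∪ A) is 2-vertex strongly biconnected. -/

import Mathlib

/-- Reachability inside the vertex set `S` along the relation `R`
    (all intermediate vertices must lie in `S`). -/
def ReachOn {V : Type*} (R : V → V → Prop) (S : Set V) : V → V → Prop :=
  Relation.ReflTransGen (fun a b => R a b ∧ a ∈ S ∧ b ∈ S)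

/-- The subgraph of the directed graph `(V, E)` induced on `S` is strongly
    connected: every vertex of `S` reaches every vertex of `S` by a directed
    path staying inside `S`. -/
def StronglyConnectedOn {V : Type*} (E : Set (V × V)) (S : Set V) : Prop :=
  ∀ u ∈ S, ∀ v ∈ S, ReachOn (fun a b => (a, b) ∈ E) S u v

/-- The subgraph of the underlying undirected graph of `(V, E)` induced on `S`
    is connected. -/
def UndirConnectedOn {V : Type*} (E : Set (V × V)) (S : Set V) : Prop :=
  ∀ u ∈ S, ∀ v ∈ S, ReachOn (fun a b => (a, b) ∈ E ∨ (b, a) ∈ E) S u v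

/-- The subgraph of the underlying undirected graph of `(V, E)` induced on `S`
    is biconnected: it has at least `3` vertices and the removal of any single
    vertex leaves a connected graph. -/
def BiconnectedOn {V : Type*} (E : Set (V × V)) (S : Set V) : Prop :=
  3 ≤ S.ncard ∧ ∀ x ∈ S, UndirConnectedOn E (S \ {x})

/-- The subgraph of the directed graph `(V, E)` induced on `S` is strongly
    biconnected: it is strongly connected and its underlying undirected graph
    is biconnected. -/
def StronglyBiconnectedOn {V : Type*} (E : Set (V × V)) (S : Set V) : Prop :=
  StronglyConnectedOn E S ∧ BiconnectedOn E S

/-- `C` is a strongly biconnected component of the directed graph `(V, E)`: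
    a maximal vertex subset inducing a strongly biconnected subgraph. -/
def IsSBComponent {V : Type*} (E : Set (V × V)) (C : Set V) : Prop :=
  StronglyBiconnectedOn E C ∧
    ∀ D : Set V, C ⊆ D → StronglyBiconnectedOn E D → D ⊆ C

/-- The directed graph `(V, E)` is `2`-vertex strongly biconnected: it has at
    least `3` vertices, it is strongly biconnected, and the removal of any
    single vertex leaves a strongly biconnected graph. -/
def TwoVertexStronglyBiconnected (V : Type*) [Fintype V] (E : Set (V × V)) : Prop :=
  3 ≤ Fintype.card V ∧ StronglyBiconnectedOn E (Set.univ : Set V) ∧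
    ∀ x : V, StronglyBiconnectedOn E ((Set.univ : Set V) \ {x})

/-- The directed graph `(V, E)` is `2`-vertex-connected: it has at least `3`
    vertices, it is strongly connected, and the removal of any single vertex
    leaves a strongly connected graph (no strong articulation points). -/
def TwoVertexConnectedDir (V : Type*) [Fintype V] (E : Set (V × V)) : Prop :=
  3 ≤ Fintype.card V ∧ StronglyConnectedOn E (Set.univ : Set V) ∧
    ∀ x : V, StronglyConnectedOn E ((Set.univ : Set V) \ {x})

/-- The edge set of the underlying undirected graph of the directed graph
    `(V, E)`, as unordered pairs of vertices. -/
def underlyingEdges {V : Type*} (E : Set (V × V)) : Set (Sym2 V) :=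
  {e | ∃ v w : V, e = s(v, w) ∧ (v, w) ∈ E}

/-- The subgraph of the undirected graph `(V, U)` (edges given as unordered
    pairs) induced on `S` is connected. -/
def SymConnectedOn {V : Type*} (U : Set (Sym2 V)) (S : Set V) : Prop :=
  ∀ u ∈ S, ∀ v ∈ S, ReachOn (fun a b => s(a, b) ∈ U) S u v

/-- The undirected graph `(V, U)` is `3`-vertex-connected: it has more than
    `3` vertices and the removal of any set of fewer than `3` vertices leaves
    a connected graph. -/
def SymThreeVertexConnected (V : Type*) [Fintype V] (U : Set (Sym2 V)) : Prop :=
  3 < Fintype.card V ∧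
    ∀ L : Set V, L.ncard < 3 → SymConnectedOn U ((Set.univ : Set V) \ L)

/-- `(V, L)` is a minimal `2`-vertex-connected spanning subgraph of the
    directed graph `(V, E)`: `L ⊆ E`, `(V, L)` is `2`-vertex-connected, and
    removing any edge of `L` destroys `2`-vertex-connectivity. -/
def MinimalTwoVertexConnectedSpanning (V : Type*) [Fintype V]
    (E L : Set (V × V)) : Prop :=
  L ⊆ E ∧ TwoVertexConnectedDir V L ∧
    ∀ e ∈ L, ¬ TwoVertexConnectedDir V (L \ {e})

/-- `(V, U)` is a minimal `3`-vertex-connected spanning subgraph of the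
    underlying undirected graph of the directed graph `(V, E)`: `U` is a set
    of underlying edges of `E`, `(V, U)` is `3`-vertex-connected, and removing
    any edge of `U` destroys `3`-vertex-connectivity. -/
def MinimalThreeVertexConnectedSpanning (V : Type*) [Fintype V]
    (E : Set (V × V)) (U : Set (Sym2 V)) : Prop :=
  U ⊆ underlyingEdges E ∧ SymThreeVertexConnected V U ∧
    ∀ e ∈ U, ¬ SymThreeVertexConnected V (U \ {e})

theorem reachOn_mono {V : Type*} {R R' : V → V → Prop} {S : Set V}
    (h : ∀ a b, R a b → R' a b) {u v : V} (hr : ReachOn R S u v) :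
    ReachOn R' S u v := by
  unfold ReachOn at *
  induction hr with
  | refl => exact Relation.ReflTransGen.refl
  | tail _ hbc ih => exact ih.tail ⟨h _ _ hbc.1, hbc.2.1, hbc.2.2⟩

/-- Let `G = (V, E)` be a `2`-vertex strongly biconnected
directed graph, let `G₁ = (V, L)` be a minimal `2`-vertex-connected spanning
subgraph of `G`, and let `G₂ = (V, U)` be a minimal `3`-vertex-connected
spanning subgraph of the underlying undirected graph of `G`.  Let
`A = {(v, w) ∈ E : the undirected edge {v, w} belongs to U}`.  Then the
directed spanning subgraph `G_s = (V, L ∪ A)` is `2`-vertex strongly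
biconnected. -/
theorem stmt6 {V : Type*} [Fintype V] (E L : Set (V × V)) (U : Set (Sym2 V))
    (A : Set (V × V))
    (hG : TwoVertexStronglyBiconnected V E)
    (hL : MinimalTwoVertexConnectedSpanning V E L)
    (hU : MinimalThreeVertexConnectedSpanning V E U)
    (hA : A = {p : V × V | p ∈ E ∧ s(p.1, p.2) ∈ U}) :
    TwoVertexStronglyBiconnected V (L ∪ A) := by
  obtain ⟨hLE, ⟨hc3, hLsc, hLscdel⟩, hLmin⟩ := hL
  obtain ⟨hUE, ⟨hc3', hUsc⟩, hUmin⟩ := hU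
  -- every U-edge gives an A-edge in some direction
  have hedge : ∀ a b : V, s(a, b) ∈ U → (a, b) ∈ A ∨ (b, a) ∈ A := by
    intro a b hab
    obtain ⟨v, w, hvw, hE⟩ := hUE hab
    rw [Sym2.eq_iff] at hvw
    rcases hvw with ⟨rfl, rfl⟩ | ⟨rfl, rfl⟩
    · left; rw [hA]; exact ⟨hE, hab⟩
    · right; rw [hA]; refine ⟨hE, ?_⟩; rwa [Sym2.eq_swap]
  -- directed strong connectivity monotone from L
  have hscL : ∀ S : Set V, StronglyConnectedOn L S →
      StronglyConnectedOn (L ∪ A) S := by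
    intro S h u hu v hv
    exact reachOn_mono (fun a b hab => Or.inl hab) (h u hu v hv)
  -- strong connectivity gives undirected connectivity
  have hundir : ∀ S : Set V, StronglyConnectedOn (L ∪ A) S →
      UndirConnectedOn (L ∪ A) S := by
    intro S h u hu v hv
    exact reachOn_mono (fun a b hab => Or.inl hab) (h u hu v hv)
  -- U-connectivity gives undirected (L∪A)-connectivity
  have hUund : ∀ S : Set V, SymConnectedOn U S → UndirConnectedOn (L ∪ A) S := by
    intro S h u hu v hv
    refine reachOn_mono (fun a b hab => ?_) (h u hu v hv)
    rcases hedge a b hab with h' | h'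
    · exact Or.inl (Or.inr h')
    · exact Or.inr (Or.inr h')
  refine ⟨hc3, ⟨hscL _ hLsc, ?_, ?_⟩, ?_⟩
  · rw [Set.ncard_univ, Nat.card_eq_fintype_card]; exact hc3
  · intro x _
    exact hundir _ (hscL _ (hLscdel x))
  · intro x
    refine ⟨hscL _ (hLscdel x), (hG.2.2 x).2.1, ?_⟩
    intro y _
    have hset : ((Set.univ : Set V) \ {x}) \ {y} =
        (Set.univ : Set V) \ ({x, y} : Set V) := by
      ext z; simp
    rw [hset]
    refine hUund _ (hUsc {x, y} ?_)
    calc ({x, y} : Set V).ncard ≤ 2 := Set.ncard_insert_le x {y} |>.trans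
          (by simp [Set.ncard_singleton])
      _ < 3 := by norm_num
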